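/- Let G be a transient network, ρ a vertex, and A a set of vertices. Then the probability that the random walk started at ρ ever hits A satisfies P_ρ(hit A) ≤ C^F_eff(ρ ↔ A; G) / C_eff(ρ → ∞; G), where C^F_eff is the free effective conductance and C_eff(ρ → ∞; G) is the effective conductance from ρ to infinity. -/

import Mathlib

open ENNReal
open scoped Classical

/-- The Dirichlet energy of a function on a network. -/
noncomputable def dirichletEnergy {V : Type*} (G : SimpleGraph V) (c : V → V → ℝ)
    (f : V → ℝ) : ℝ≥0∞ :=
  (1 / 2) * ∑' p : V × V,
    if G.Adj p.1 p.2 then ENNReal.ofReal (c p.1 p.2 * (f p.1 - f p.2) ^ 2) else 0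

/-- The free effective conductance between vertex sets `A` and `B`. -/
noncomputable def freeEffCond {V : Type*} (G : SimpleGraph V) (c : V → V → ℝ)
    (A B : Set V) : ℝ≥0∞ :=
  ⨅ (F : V → ℝ) (_ : ∀ a ∈ A, F a = 1) (_ : ∀ b ∈ B, F b = 0), dirichletEnergy G c F

/-- The effective conductance from `ρ` to infinity, as the infimum over finite sets `W`
of the free effective conductance from `ρ` to the complement of `W`. -/
noncomputable def effCondToInfinity {V : Type*} (G : SimpleGraph V) (c : V → V → ℝ)
    (ρ : V) : ℝ≥0∞ :=
  ⨅ W : Finset V, freeEffCond G c {ρ} {v | v ∉ W}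

/-- One-step transition probabilities of the random walk on the network `(G, c)`. -/
noncomputable def walkStep {V : Type*} (G : SimpleGraph V)
    [∀ v, Fintype (G.neighborSet v)] (c : V → V → ℝ) (u v : V) : ℝ :=
  if G.Adj u v then c u v / ∑ w ∈ G.neighborFinset u, c u w else 0

/-- `netHitBy G c A n u`: probability that the network random walk started at `u` visits
`A` within `n` steps; its supremum over `n` is `P_u(hit A)`. -/
noncomputable def netHitBy {V : Type*} (G : SimpleGraph V)
    [∀ v, Fintype (G.neighborSet v)] (c : V → V → ℝ) (A : Set V) : ℕ → V → ℝ
  | 0, u => if u ∈ A then 1 else 0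
  | n + 1, u => if u ∈ A then 1
      else ∑ w ∈ G.neighborFinset u, walkStep G c u w * netHitBy G c A n w

namespace HitAux

/-! ### clamping to [0,1] -/

/-- clamp a real number into `[0,1]`. -/
noncomputable def clamp (x : ℝ) : ℝ := max 0 (min x 1)

lemma clamp_nonneg (x : ℝ) : 0 ≤ clamp x := le_max_left _ _

lemma clamp_le_one (x : ℝ) : clamp x ≤ 1 := by
  unfold clamp
  rcases le_total x 1 with h | h <;> simp [min_eq_left, min_eq_right, h]

lemma clamp_one : clamp 1 = 1 := by norm_num [clamp]

lemma clamp_zero : clamp 0 = 0 := by norm_num [clamp]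

lemma clamp_lipschitz (a b : ℝ) : |clamp a - clamp b| ≤ |a - b| := by
  unfold clamp
  calc |max 0 (min a 1) - max 0 (min b 1)| ≤ |min a 1 - min b 1| := by
        rw [max_comm 0 (min a 1), max_comm 0 (min b 1)]
        exact abs_max_sub_max_le_abs _ _ _
    _ ≤ |a - b| := by
        rcases le_total a 1 with ha | ha <;> rcases le_total b 1 with hb | hb <;>
          simp [min_eq_left, min_eq_right, ha, hb, abs_le] <;>
          cases' abs_cases (a - b) with h h <;> constructor <;> linarith [h.1]

lemma clamp_sub_sq_le (a b : ℝ) : (clamp a - clamp b) ^ 2 ≤ (a - b) ^ 2 := by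
  have h := clamp_lipschitz a b
  have h1 : |clamp a - clamp b| ^ 2 ≤ |a - b| ^ 2 :=
    pow_le_pow_left₀ (abs_nonneg _) h 2
  simpa [sq_abs] using h1

end HitAux

namespace HitAux

section Energy

variable {V : Type*} (G : SimpleGraph V) (c : V → V → ℝ)

/-- conductances of the auxiliary finite subnetwork: edges of `G` meeting `W`. -/
noncomputable def epair (W : Finset V) (x y : V) : ℝ :=
  if G.Adj x y ∧ (x ∈ W ∨ y ∈ W) then c x y else 0

/-- energy of the finite subnetwork, summed over `W'`. -/
noncomputable def Efin (W W' : Finset V) (F : V → ℝ) : ℝ :=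
  (1 / 2) * ∑ x ∈ W', ∑ y ∈ W', epair G c W x y * (F x - F y) ^ 2

variable {G c}

lemma epair_nonneg (hcpos : ∀ u v, G.Adj u v → 0 < c u v) (W : Finset V) (x y : V) :
    0 ≤ epair G c W x y := by
  unfold epair; split_ifs with h
  · exact (hcpos _ _ h.1).le
  · exact le_refl 0

lemma epair_symm (hcsymm : ∀ u v, c u v = c v u) (W : Finset V) (x y : V) :
    epair G c W x y = epair G c W y x := by
  unfold epair
  by_cases h : G.Adj x y ∧ (x ∈ W ∨ y ∈ W)
  · rw [if_pos h, if_pos ⟨h.1.symm, h.2.symm⟩, hcsymm]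
  · rw [if_neg h, if_neg]
    intro h2; exact h ⟨h2.1.symm, h2.2.symm⟩

lemma epair_self (W : Finset V) (x : V) : epair G c W x x = 0 := by
  unfold epair; rw [if_neg]; rintro ⟨h, -⟩; exact G.irrefl h

lemma Efin_nonneg (hcpos : ∀ u v, G.Adj u v → 0 < c u v) (W W' : Finset V) (F : V → ℝ) :
    0 ≤ Efin G c W W' F := by
  unfold Efin
  have : ∀ x ∈ W', (0:ℝ) ≤ ∑ y ∈ W', epair G c W x y * (F x - F y) ^ 2 := by
    intro x _
    exact Finset.sum_nonneg fun y _ =>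
      mul_nonneg (epair_nonneg hcpos W x y) (sq_nonneg _)
  nlinarith [Finset.sum_nonneg this]

lemma continuous_Efin (W W' : Finset V) : Continuous (fun F : V → ℝ => Efin G c W W' F) := by
  apply Continuous.mul continuous_const
  apply continuous_finset_sum
  intro x _
  apply continuous_finset_sum
  intro y _
  exact Continuous.mul continuous_const (((continuous_apply x).sub (continuous_apply y)).pow 2)

/-- summation by parts for the finite energy. -/
lemma Efin_eq_sum_mul (hcsymm : ∀ u v, c u v = c v u) (W W' : Finset V) (F : V → ℝ) :
    Efin G c W W' F
      = ∑ x ∈ W', F x * ∑ y ∈ W', epair G c W x y * (F x - F y) := by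
  unfold Efin
  have key : ∑ x ∈ W', ∑ y ∈ W', epair G c W x y * (F x - F y) ^ 2
      = 2 * ∑ x ∈ W', ∑ y ∈ W', epair G c W x y * (F x * (F x - F y)) := by
    have h1 : ∀ x y : V, epair G c W x y * (F x - F y) ^ 2
        = epair G c W x y * (F x * (F x - F y)) - epair G c W x y * (F y * (F x - F y)) := by
      intro x y; ring
    rw [Finset.sum_congr rfl fun x _ => Finset.sum_congr rfl fun y _ => h1 x y]
    rw [Finset.sum_congr rfl fun x (_ : x ∈ W') => Finset.sum_sub_distrib _ _]
    rw [Finset.sum_sub_distrib]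
    have h2 : ∑ x ∈ W', ∑ y ∈ W', epair G c W x y * (F y * (F x - F y))
        = - ∑ x ∈ W', ∑ y ∈ W', epair G c W x y * (F x * (F x - F y)) := by
      rw [Finset.sum_comm]
      rw [← Finset.sum_neg_distrib]
      apply Finset.sum_congr rfl; intro x _
      rw [← Finset.sum_neg_distrib]
      apply Finset.sum_congr rfl; intro y _
      rw [epair_symm hcsymm]
      ring
    rw [h2]; ring
  have goal' : ∑ x ∈ W', ∑ y ∈ W', epair G c W x y * (F x * (F x - F y))
      = ∑ x ∈ W', F x * ∑ y ∈ W', epair G c W x y * (F x - F y) := by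
    apply Finset.sum_congr rfl; intro x _
    rw [Finset.mul_sum]
    apply Finset.sum_congr rfl; intro y _
    ring
  rw [key, ← goal']
  ring

/-- if `m` vanishes or is harmonic at every vertex of `W'` other than `ρ`, the energy
is the flow out of `ρ`. -/
lemma Efin_eq_flow (hcsymm : ∀ u v, c u v = c v u)
    (W W' : Finset V) (m : V → ℝ) (ρ : V) (hρ : ρ ∈ W') (hm : m ρ = 1)
    (h : ∀ x ∈ W', x ≠ ρ → m x = 0 ∨
      (∑ y ∈ W', epair G c W x y) * m x = ∑ y ∈ W', epair G c W x y * m y) :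
    Efin G c W W' m = ∑ y ∈ W', epair G c W ρ y * (m ρ - m y) := by
  rw [Efin_eq_sum_mul hcsymm]
  rw [Finset.sum_eq_single_of_mem ρ hρ]
  · rw [hm, one_mul]
  · intro x hx hxρ
    rcases h x hx hxρ with h0 | hh
    · rw [h0, zero_mul]
    · have : ∑ y ∈ W', epair G c W x y * (m x - m y)
          = (∑ y ∈ W', epair G c W x y) * m x - ∑ y ∈ W', epair G c W x y * m y := by
        rw [Finset.sum_mul]
        rw [← Finset.sum_sub_distrib]
        apply Finset.sum_congr rfl; intro y _; ring
      rw [this, hh, sub_self, mul_zero]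

end Energy

end HitAux


namespace HitAux

section Harmonic

variable {V : Type*} {G : SimpleGraph V} {c : V → V → ℝ}

/-- Splitting off the terms involving a distinguished vertex `u`. -/
lemma Efin_split (hcsymm : ∀ u v, c u v = c v u) (W W' : Finset V) (u : V) (hu : u ∈ W')
    (F : V → ℝ) :
    Efin G c W W' F
      = (1/2) * ∑ x ∈ W'.erase u, ∑ y ∈ W'.erase u, epair G c W x y * (F x - F y) ^ 2
        + ∑ y ∈ W', epair G c W u y * (F u - F y) ^ 2 := by
  unfold Efin
  rw [← Finset.sum_erase_add W' _ hu]
  have hinner : ∀ x : V, ∑ y ∈ W', epair G c W x y * (F x - F y) ^ 2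
      = ∑ y ∈ W'.erase u, epair G c W x y * (F x - F y) ^ 2
        + epair G c W x u * (F x - F u) ^ 2 :=
    fun x => (Finset.sum_erase_add W' _ hu).symm
  rw [Finset.sum_congr rfl fun x _ => hinner x, Finset.sum_add_distrib, hinner u]
  have hdiag : epair G c W u u * (F u - F u) ^ 2 = 0 := by
    rw [epair_self]; ring
  have hflip : ∑ x ∈ W'.erase u, epair G c W x u * (F x - F u) ^ 2
      = ∑ y ∈ W'.erase u, epair G c W u y * (F u - F y) ^ 2 := by
    apply Finset.sum_congr rfl; intro x _
    rw [epair_symm hcsymm]; ring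
  rw [hdiag, hflip]
  have h2 : ∑ y ∈ W', epair G c W u y * (F u - F y) ^ 2
      = ∑ y ∈ W'.erase u, epair G c W u y * (F u - F y) ^ 2 := by
    rw [← Finset.sum_erase_add W' _ hu, hdiag, add_zero]
  ring

/-- An energy minimiser over a box-constrained product set is harmonic at free coordinates. -/
lemma minOn_harmonic (hcsymm : ∀ u v, c u v = c v u) (hcpos : ∀ u v, G.Adj u v → 0 < c u v)
    (W W' : Finset V) (S : V → Set ℝ) (m : V → ℝ) (hm : m ∈ Set.pi Set.univ S)
    (hmin : ∀ F ∈ Set.pi Set.univ S, Efin G c W W' m ≤ Efin G c W W' F)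
    (hbox : ∀ x, S x ⊆ Set.Icc (0:ℝ) 1)
    (u : V) (hu : u ∈ W') (hSu : S u = Set.Icc (0:ℝ) 1) :
    (∑ y ∈ W', epair G c W u y) * m u = ∑ y ∈ W', epair G c W u y * m y := by
  set a := ∑ y ∈ W', epair G c W u y with ha_def
  set b := ∑ y ∈ W', epair G c W u y * m y with hb_def
  have hmIcc : ∀ x, m x ∈ Set.Icc (0:ℝ) 1 := fun x => hbox x (hm x trivial)
  have hanon : 0 ≤ a := Finset.sum_nonneg fun y _ => epair_nonneg hcpos W u y
  by_cases ha : a = 0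
  · have ha2 : (∑ y ∈ W', epair G c W u y) = 0 := by rw [← ha_def]; exact ha
    have hz : ∀ y ∈ W', epair G c W u y = 0 :=
      (Finset.sum_eq_zero_iff_of_nonneg (fun y _ => epair_nonneg hcpos W u y)).1 ha2
    have hb : b = 0 := by
      rw [hb_def]
      exact Finset.sum_eq_zero fun y hy => by rw [hz y hy, zero_mul]
    rw [ha, hb, zero_mul]
  · have ha' : 0 < a := lt_of_le_of_ne hanon (Ne.symm ha)
    have hb0 : 0 ≤ b := Finset.sum_nonneg fun y _ =>
      mul_nonneg (epair_nonneg hcpos W u y) (hmIcc y).1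
    have hba : b ≤ a := Finset.sum_le_sum fun y hy =>
      mul_le_of_le_one_right (epair_nonneg hcpos W u y) (hmIcc y).2
    set t := b / a with ht_def
    have htIcc : t ∈ Set.Icc (0:ℝ) 1 :=
      ⟨div_nonneg hb0 hanon, (div_le_one ha').mpr hba⟩
    set m' := Function.update m u t with hm'_def
    have hm' : m' ∈ Set.pi Set.univ S := by
      intro x _
      by_cases hx : x = u
      · subst hx; rw [hm'_def, Function.update_self, hSu]; exact htIcc
      · rw [hm'_def, Function.update_of_ne hx]; exact hm x trivial
    have hle := hmin m' hm'
    rw [Efin_split hcsymm W W' u hu m, Efin_split hcsymm W W' u hu m'] at hle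
    have heq1 : ∑ x ∈ W'.erase u, ∑ y ∈ W'.erase u, epair G c W x y * (m' x - m' y) ^ 2
        = ∑ x ∈ W'.erase u, ∑ y ∈ W'.erase u, epair G c W x y * (m x - m y) ^ 2 := by
      apply Finset.sum_congr rfl; intro x hx
      apply Finset.sum_congr rfl; intro y hy
      rw [hm'_def, Function.update_of_ne (Finset.ne_of_mem_erase hx),
        Function.update_of_ne (Finset.ne_of_mem_erase hy)]
    have heq2 : ∑ y ∈ W', epair G c W u y * (m' u - m' y) ^ 2
        = ∑ y ∈ W', epair G c W u y * (t - m y) ^ 2 := by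
      apply Finset.sum_congr rfl; intro y hy
      by_cases hy' : y = u
      · subst hy'; rw [epair_self, zero_mul, zero_mul]
      · rw [hm'_def, Function.update_of_ne hy', Function.update_self]
    rw [heq1, heq2] at hle
    have hle2 : ∑ y ∈ W', epair G c W u y * (m u - m y) ^ 2
        ≤ ∑ y ∈ W', epair G c W u y * (t - m y) ^ 2 := by linarith
    have expand : ∀ s : ℝ, (∑ y ∈ W', epair G c W u y * (s - m y) ^ 2)
        = s ^ 2 * a - 2 * s * b + ∑ y ∈ W', epair G c W u y * (m y) ^ 2 := by
      intro s
      have hterm : ∀ y ∈ W', epair G c W u y * (s - m y) ^ 2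
          = s ^ 2 * epair G c W u y - 2 * s * (epair G c W u y * m y)
            + epair G c W u y * (m y) ^ 2 := by
        intro y _; ring
      rw [Finset.sum_congr rfl hterm, Finset.sum_add_distrib, Finset.sum_sub_distrib,
        ← Finset.mul_sum, ← Finset.mul_sum]
    rw [expand (m u), expand t] at hle2
    have h1 : a * t = b := by
      rw [ht_def]; field_simp
    have h2 : ((a * m u) - b) ^ 2 ≤ 0 := by nlinarith [hle2, ha', h1]
    have h3 : ((a * m u) - b) ^ 2 = 0 := le_antisymm h2 (sq_nonneg _)
    have h4 : a * m u - b = 0 := sq_eq_zero_iff.mp h3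
    linarith

/-- Existence of a constrained energy minimiser. -/
lemma exists_minOn (G : SimpleGraph V) (c : V → V → ℝ) (W W' : Finset V) (S : V → Set ℝ)
    (hcpt : ∀ x, IsCompact (S x)) (hne : ∀ x, (S x).Nonempty) :
    ∃ m ∈ Set.pi Set.univ S, ∀ F ∈ Set.pi Set.univ S, Efin G c W W' m ≤ Efin G c W W' F := by
  have hcpt' : IsCompact (Set.pi Set.univ S) := isCompact_univ_pi hcpt
  have hne' : (Set.pi Set.univ S).Nonempty := by
    refine ⟨fun x => (hne x).choose, fun x _ => (hne x).choose_spec⟩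
  obtain ⟨m, hmS, hmin⟩ := hcpt'.exists_isMinOn hne'
    ((continuous_Efin (G := G) (c := c) W W').continuousOn)
  exact ⟨m, hmS, fun F hF => hmin hF⟩

/-- Converting sums over `W'` weighted by `epair` to sums over the neighbours. -/
lemma sum_epair_mul [∀ v, Fintype (G.neighborSet v)] (W W' : Finset V) (u : V) (hu : u ∈ W)
    (hNW' : ∀ y, G.Adj u y → y ∈ W') (F : V → ℝ) :
    ∑ y ∈ W', epair G c W u y * F y = ∑ y ∈ G.neighborFinset u, c u y * F y := by
  have h1 : ∀ y ∈ W', epair G c W u y * F y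
      = if G.Adj u y then c u y * F y else 0 := by
    intro y _
    unfold epair
    by_cases hadj : G.Adj u y
    · rw [if_pos ⟨hadj, Or.inl hu⟩, if_pos hadj]
    · rw [if_neg (fun h => hadj h.1), if_neg hadj, zero_mul]
  rw [Finset.sum_congr rfl h1, ← Finset.sum_filter]
  congr 1
  ext z
  simp only [Finset.mem_filter, SimpleGraph.mem_neighborFinset]
  exact ⟨fun h => h.2, fun h => ⟨hNW' z h, h⟩⟩

end Harmonic

end HitAux


namespace HitAux

section Walk

variable {V : Type*} (G : SimpleGraph V) [∀ v, Fintype (G.neighborSet v)] (c : V → V → ℝ)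

/-- probability of hitting `A` within `k` steps, killed outside `W`. -/
noncomputable def hitR (A : Set V) (W : Finset V) : ℕ → V → ℝ
  | 0, u => if u ∈ A then 1 else 0
  | k + 1, u => if u ∈ A then 1 else if u ∈ W then
      ∑ z ∈ G.neighborFinset u, walkStep G c u z * hitR A W k z else 0

/-- probability of hitting `A` within `k` steps before visiting `ρ`, killed outside `W`. -/
noncomputable def befR (A : Set V) (W : Finset V) (ρ : V) : ℕ → V → ℝ
  | 0, u => if u ∈ A then 1 else 0
  | k + 1, u => if u ∈ A then 1 else if u = ρ then 0 else if u ∈ W then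
      ∑ z ∈ G.neighborFinset u, walkStep G c u z * befR A W ρ k z else 0

/-- probability of returning to `ρ` within `k` steps before hitting `A`, killed outside `W`. -/
noncomputable def retR (A : Set V) (W : Finset V) (ρ : V) : ℕ → V → ℝ
  | 0, u => if u = ρ then 1 else 0
  | k + 1, u => if u = ρ then 1 else if u ∈ A then 0 else if u ∈ W then
      ∑ z ∈ G.neighborFinset u, walkStep G c u z * retR A W ρ k z else 0

/-- balls around `ρ` in the graph. -/
noncomputable def Bset (ρ : V) : ℕ → Finset V
  | 0 => {ρ}
  | k + 1 => Bset ρ k ∪ (Bset ρ k).biUnion (fun v => G.neighborFinset v)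

variable {G c}

lemma walkStep_nonneg (hcpos : ∀ u v, G.Adj u v → 0 < c u v) (u v : V) :
    0 ≤ walkStep G c u v := by
  unfold walkStep
  split_ifs with h
  · exact div_nonneg (hcpos _ _ h).le
      (Finset.sum_nonneg fun z hz => (hcpos _ _ (by simpa using hz)).le)
  · exact le_refl 0

/-- one step of the walk against a harmonic function. -/
lemma step_le (hcpos : ∀ u v, G.Adj u v → 0 < c u v)
    (u : V) (X F : V → ℝ) (hXF : ∀ z ∈ G.neighborFinset u, X z ≤ F z)
    (hharm : (∑ z ∈ G.neighborFinset u, c u z) * F u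
      = ∑ z ∈ G.neighborFinset u, c u z * F z)
    (hFu : 0 ≤ F u) :
    ∑ z ∈ G.neighborFinset u, walkStep G c u z * X z ≤ F u := by
  rcases Finset.eq_empty_or_nonempty (G.neighborFinset u) with he | hne
  · rw [he]; simpa using hFu
  · have hpi : 0 < ∑ z ∈ G.neighborFinset u, c u z :=
      Finset.sum_pos (fun z hz => hcpos _ _ (by simpa using hz)) hne
    calc ∑ z ∈ G.neighborFinset u, walkStep G c u z * X z
        ≤ ∑ z ∈ G.neighborFinset u, walkStep G c u z * F z :=
          Finset.sum_le_sum fun z hz =>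
            mul_le_mul_of_nonneg_left (hXF z hz) (walkStep_nonneg hcpos u z)
      _ = (∑ z ∈ G.neighborFinset u, c u z * F z) / (∑ z ∈ G.neighborFinset u, c u z) := by
          rw [Finset.sum_div]
          apply Finset.sum_congr rfl; intro z hz
          rw [walkStep, if_pos (show G.Adj u z by simpa using hz)]
          ring
      _ = F u := by rw [← hharm]; field_simp

lemma retR_nonneg (hcpos : ∀ u v, G.Adj u v → 0 < c u v) (A : Set V) (W : Finset V) (ρ : V) :
    ∀ k u, 0 ≤ retR G c A W ρ k u := by
  intro k
  induction k with
  | zero => intro u; rw [retR]; split_ifs <;> norm_num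
  | succ k ih =>
    intro u; rw [retR]
    split_ifs <;> try norm_num
    exact Finset.sum_nonneg fun z _ => mul_nonneg (walkStep_nonneg hcpos u z) (ih z)

lemma befR_nonneg (hcpos : ∀ u v, G.Adj u v → 0 < c u v) (A : Set V) (W : Finset V) (ρ : V) :
    ∀ k u, 0 ≤ befR G c A W ρ k u := by
  intro k
  induction k with
  | zero => intro u; rw [befR]; split_ifs <;> norm_num
  | succ k ih =>
    intro u; rw [befR]
    split_ifs <;> try norm_num
    exact Finset.sum_nonneg fun z _ => mul_nonneg (walkStep_nonneg hcpos u z) (ih z)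

lemma retR_rho (A : Set V) (W : Finset V) (ρ : V) (k : ℕ) : retR G c A W ρ k ρ = 1 := by
  cases k with
  | zero => rw [retR, if_pos rfl]
  | succ k => rw [retR, if_pos rfl]

lemma befR_rho (A : Set V) (W : Finset V) (ρ : V) (hρA : ρ ∉ A) (k : ℕ) :
    befR G c A W ρ k ρ = 0 := by
  cases k with
  | zero => rw [befR, if_neg hρA]
  | succ k => rw [befR, if_neg hρA, if_pos rfl]

lemma retR_le (hcpos : ∀ u v, G.Adj u v → 0 < c u v)
    (A : Set V) (W : Finset V) (ρ : V) (f : V → ℝ)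
    (hf1 : f ρ = 1) (hf0 : ∀ x, 0 ≤ f x)
    (hharm : ∀ u ∈ W, u ≠ ρ → u ∉ A →
      (∑ z ∈ G.neighborFinset u, c u z) * f u = ∑ z ∈ G.neighborFinset u, c u z * f z) :
    ∀ k u, retR G c A W ρ k u ≤ f u := by
  intro k
  induction k with
  | zero =>
    intro u; rw [retR]
    split_ifs with h
    · subst h; rw [hf1]
    · exact hf0 u
  | succ k ih =>
    intro u; rw [retR]
    split_ifs with h1 h2 h3
    · subst h1; rw [hf1]
    · exact hf0 u
    · exact step_le hcpos u _ f (fun z _ => ih z) (hharm u h3 h1 h2) (hf0 u)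
    · exact hf0 u

lemma befR_le (hcpos : ∀ u v, G.Adj u v → 0 < c u v)
    (A : Set V) (W : Finset V) (ρ : V) (w : V → ℝ)
    (hw1 : w ρ = 1) (hw0A : ∀ x ∈ A, w x = 0) (hw01 : ∀ x, 0 ≤ w x ∧ w x ≤ 1)
    (hharm : ∀ u ∈ W, u ≠ ρ → u ∉ A →
      (∑ z ∈ G.neighborFinset u, c u z) * w u = ∑ z ∈ G.neighborFinset u, c u z * w z) :
    ∀ k u, befR G c A W ρ k u ≤ 1 - w u := by
  intro k
  induction k with
  | zero =>
    intro u; rw [befR]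
    split_ifs with h
    · rw [hw0A u h]; norm_num
    · linarith [(hw01 u).2]
  | succ k ih =>
    intro u; rw [befR]
    split_ifs with h1 h2 h3
    · rw [hw0A u h1]; norm_num
    · subst h2; rw [hw1]; norm_num
    · refine step_le hcpos u _ (fun z => 1 - w z) (fun z _ => ih z) ?_ ?_
      · have hsub : ∑ z ∈ G.neighborFinset u, c u z * (1 - w z)
            = (∑ z ∈ G.neighborFinset u, c u z) - ∑ z ∈ G.neighborFinset u, c u z * w z := by
          rw [← Finset.sum_sub_distrib]
          apply Finset.sum_congr rfl; intro z _; ring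
        rw [hsub, ← hharm u h3 h2 h1]; ring
      · show (0:ℝ) ≤ 1 - w u
        linarith [(hw01 u).2]
    · linarith [(hw01 u).2]

lemma hitR_le_master (hcpos : ∀ u v, G.Adj u v → 0 < c u v)
    (A : Set V) (W : Finset V) (ρ : V) (hρA : ρ ∉ A) (hρW : ρ ∈ W)
    (M : ℝ) (hM0 : 0 ≤ M) (bf rf : V → ℝ)
    (hbef : ∀ k z, befR G c A W ρ k z ≤ bf z)
    (hret : ∀ k z, retR G c A W ρ k z ≤ rf z)
    (hMstep : ∑ z ∈ G.neighborFinset ρ, walkStep G c ρ z * (bf z + rf z * M) ≤ M) :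
    ∀ k u, hitR G c A W k u ≤ befR G c A W ρ k u + retR G c A W ρ k u * M := by
  intro k
  induction k with
  | zero =>
    intro u
    rw [hitR, befR, retR]
    by_cases h1 : u ∈ A
    · have huρ : u ≠ ρ := fun h => hρA (h ▸ h1)
      rw [if_pos h1, if_neg huρ]; norm_num
    · rw [if_neg h1]
      by_cases h2 : u = ρ
      · rw [if_pos h2]; simpa using hM0
      · rw [if_neg h2]; norm_num
  | succ k ih =>
    intro u
    by_cases h1 : u ∈ A
    · have huρ : u ≠ ρ := fun h => hρA (h ▸ h1)
      rw [hitR, if_pos h1, befR, if_pos h1, retR, if_neg huρ, if_pos h1]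
      norm_num
    by_cases h2 : u = ρ
    · have huW : u ∈ W := by rw [h2]; exact hρW
      rw [hitR, if_neg h1, if_pos huW, befR, if_neg h1, if_pos h2, retR, if_pos h2]
      have hMstep' : ∑ z ∈ G.neighborFinset u, walkStep G c u z * (bf z + rf z * M) ≤ M := by
        rw [h2]; exact hMstep
      have hstep1 : ∑ z ∈ G.neighborFinset u, walkStep G c u z * hitR G c A W k z
          ≤ ∑ z ∈ G.neighborFinset u, walkStep G c u z * (bf z + rf z * M) := by
        apply Finset.sum_le_sum
        intro z hz
        apply mul_le_mul_of_nonneg_left _ (walkStep_nonneg hcpos u z)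
        calc hitR G c A W k z ≤ befR G c A W ρ k z + retR G c A W ρ k z * M := ih z
          _ ≤ bf z + rf z * M := by nlinarith [hM0, hret k z, hbef k z]
      linarith [hstep1, hMstep']
    by_cases h3 : u ∈ W
    · rw [hitR, if_neg h1, if_pos h3, befR, if_neg h1, if_neg h2, if_pos h3,
        retR, if_neg h2, if_neg h1, if_pos h3]
      have hstep1 : ∑ z ∈ G.neighborFinset u, walkStep G c u z * hitR G c A W k z
          ≤ ∑ z ∈ G.neighborFinset u,
              (walkStep G c u z * befR G c A W ρ k z
                + (walkStep G c u z * retR G c A W ρ k z) * M) := by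
        apply Finset.sum_le_sum
        intro z hz
        have h := ih z
        have hw := walkStep_nonneg (G := G) (c := c) hcpos u z
        nlinarith [h, hw]
      rw [Finset.sum_add_distrib, ← Finset.sum_mul] at hstep1
      exact hstep1
    · rw [hitR, if_neg h1, if_neg h3, befR, if_neg h1, if_neg h2, if_neg h3,
        retR, if_neg h2, if_neg h1, if_neg h3]
      norm_num

lemma Bset_mono (ρ : V) : ∀ {j l : ℕ}, j ≤ l → Bset G ρ j ⊆ Bset G ρ l := by
  intro j l h
  induction h with
  | refl => exact subset_rfl
  | step h ih => exact ih.trans (by rw [Bset]; exact Finset.subset_union_left)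

lemma netHitBy_le_hitR (hcpos : ∀ u v, G.Adj u v → 0 < c u v)
    (A : Set V) (ρ : V) (n : ℕ) :
    ∀ k j u, j + k ≤ n → u ∈ Bset G ρ j →
      netHitBy G c A k u ≤ hitR G c A (Bset G ρ n) k u := by
  intro k
  induction k with
  | zero => intro j u _ _; rw [netHitBy, hitR]
  | succ k ih =>
    intro j u hjk hu
    by_cases h1 : u ∈ A
    · rw [netHitBy, if_pos h1, hitR, if_pos h1]
    · have huW : u ∈ Bset G ρ n := Bset_mono ρ (by omega) hu
      rw [netHitBy, if_neg h1, hitR, if_neg h1, if_pos huW]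
      apply Finset.sum_le_sum
      intro z hz
      apply mul_le_mul_of_nonneg_left _ (walkStep_nonneg hcpos u z)
      apply ih (j+1) z (by omega)
      rw [Bset]
      exact Finset.mem_union_right _ (Finset.mem_biUnion.mpr ⟨u, hu, hz⟩)

lemma netHitBy_nonneg (hcpos : ∀ u v, G.Adj u v → 0 < c u v) (A : Set V) :
    ∀ k u, 0 ≤ netHitBy G c A k u := by
  intro k
  induction k with
  | zero => intro u; rw [netHitBy]; split_ifs <;> norm_num
  | succ k ih =>
    intro u; rw [netHitBy]
    split_ifs
    · norm_num
    · exact Finset.sum_nonneg fun z _ => mul_nonneg (walkStep_nonneg hcpos u z) (ih z)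

end Walk

end HitAux


namespace HitAux

section Bridge

variable {V : Type*} {G : SimpleGraph V} {c : V → V → ℝ}

lemma ofReal_half : ENNReal.ofReal ((1:ℝ)/2) = (1/2 : ℝ≥0∞) := by
  rw [ENNReal.ofReal_div_of_pos (by norm_num)]
  norm_num

lemma ofReal_Efin (hcpos : ∀ u v, G.Adj u v → 0 < c u v) (W W' : Finset V) (F : V → ℝ) :
    ENNReal.ofReal (Efin G c W W' F)
      = (1/2 : ℝ≥0∞) * ∑ x ∈ W', ∑ y ∈ W',
          ENNReal.ofReal (epair G c W x y * (F x - F y) ^ 2) := by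
  rw [Efin, ENNReal.ofReal_mul (by norm_num : (0:ℝ) ≤ 1/2), ofReal_half]
  congr 1
  rw [ENNReal.ofReal_sum_of_nonneg (fun x _ => Finset.sum_nonneg fun y _ =>
    mul_nonneg (epair_nonneg hcpos W x y) (sq_nonneg _))]
  exact Finset.sum_congr rfl fun x _ =>
    ENNReal.ofReal_sum_of_nonneg (fun y _ =>
      mul_nonneg (epair_nonneg hcpos W x y) (sq_nonneg _))

lemma dirichletEnergy_eq_ofReal_Efin (hcpos : ∀ u v, G.Adj u v → 0 < c u v)
    (W W' : Finset V) (hWW' : W ⊆ W')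
    (hadjW' : ∀ x y, G.Adj x y → x ∈ W → y ∈ W') (F : V → ℝ)
    (hsupp : ∀ x ∉ W, F x = 0) :
    dirichletEnergy G c F = ENNReal.ofReal (Efin G c W W' F) := by
  rw [ofReal_Efin hcpos, dirichletEnergy]
  congr 1
  have h0 : ∀ p : V × V, p ∉ (W' ×ˢ W' : Finset (V × V)) →
      (if G.Adj p.1 p.2 then ENNReal.ofReal (c p.1 p.2 * (F p.1 - F p.2) ^ 2) else 0) = 0 := by
    rintro ⟨x, y⟩ hp
    by_cases hadj : G.Adj x y
    · rw [if_pos hadj]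
      rw [Finset.mem_product, not_and_or] at hp
      have hxW : x ∉ W := by
        intro hx
        rcases hp with hp | hp
        · exact hp (hWW' hx)
        · exact hp (hadjW' x y hadj hx)
      have hyW : y ∉ W := by
        intro hy
        rcases hp with hp | hp
        · exact hp (hadjW' y x hadj.symm hy)
        · exact hp (hWW' hy)
      rw [hsupp x hxW, hsupp y hyW]
      norm_num
    · rw [if_neg hadj]
  rw [tsum_eq_sum h0, Finset.sum_product]
  apply Finset.sum_congr rfl; intro x hx
  apply Finset.sum_congr rfl; intro y hy
  by_cases hadj : G.Adj x y
  · by_cases hW : x ∈ W ∨ y ∈ W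
    · rw [if_pos hadj, epair, if_pos ⟨hadj, hW⟩]
    · push_neg at hW
      rw [if_pos hadj, epair, if_neg (fun h => (not_or.mpr ⟨hW.1, hW.2⟩) h.2),
        hsupp x hW.1, hsupp y hW.2]
      norm_num
  · rw [if_neg hadj, epair, if_neg (fun h => hadj h.1), zero_mul, ENNReal.ofReal_zero]

lemma ofReal_Efin_clamp_le (hcpos : ∀ u v, G.Adj u v → 0 < c u v)
    (W W' : Finset V) (g : V → ℝ) :
    ENNReal.ofReal (Efin G c W W' (fun x => clamp (g x)))
      ≤ dirichletEnergy G c g := by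
  rw [ofReal_Efin hcpos, dirichletEnergy]
  apply mul_le_mul_right
  calc ∑ x ∈ W', ∑ y ∈ W',
        ENNReal.ofReal (epair G c W x y * (clamp (g x) - clamp (g y)) ^ 2)
      = ∑ p ∈ (W' ×ˢ W' : Finset (V × V)),
          ENNReal.ofReal (epair G c W p.1 p.2 * (clamp (g p.1) - clamp (g p.2)) ^ 2) := by
        rw [Finset.sum_product]
    _ ≤ ∑ p ∈ (W' ×ˢ W' : Finset (V × V)),
          (if G.Adj p.1 p.2 then ENNReal.ofReal (c p.1 p.2 * (g p.1 - g p.2) ^ 2) else 0) := by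
        apply Finset.sum_le_sum
        rintro ⟨x, y⟩ _
        by_cases hadj : G.Adj x y
        · rw [if_pos hadj]
          apply ENNReal.ofReal_le_ofReal
          have hc : (0:ℝ) ≤ c x y := (hcpos _ _ hadj).le
          have hep : epair G c W x y ≤ c x y := by
            rw [epair]; split_ifs <;> [exact le_refl _; exact hc]
          have h1 : epair G c W x y * (clamp (g x) - clamp (g y)) ^ 2
              ≤ c x y * (clamp (g x) - clamp (g y)) ^ 2 :=
            mul_le_mul_of_nonneg_right hep (sq_nonneg _)
          have h2 : c x y * (clamp (g x) - clamp (g y)) ^ 2 ≤ c x y * (g x - g y) ^ 2 :=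
            mul_le_mul_of_nonneg_left (clamp_sub_sq_le _ _) hc
          linarith
        · rw [if_neg hadj, epair, if_neg (fun h => hadj h.1), zero_mul,
            ENNReal.ofReal_zero]
    _ ≤ ∑' p : V × V,
          (if G.Adj p.1 p.2 then ENNReal.ofReal (c p.1 p.2 * (g p.1 - g p.2) ^ 2) else 0) :=
        ENNReal.sum_le_tsum _

end Bridge

end HitAux


open HitAux in
/-- For a transient network `G`, a vertex `ρ` and a vertex set `A`,
`P_ρ(hit A) ≤ C^F_eff(ρ ↔ A; G) / C_eff(ρ → ∞; G)`. -/
theorem hitting_prob_le_cond_ratio {V : Type*} (G : SimpleGraph V)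
    [∀ v, Fintype (G.neighborSet v)] (hG : G.Connected)
    (c : V → V → ℝ) (hcsymm : ∀ u v, c u v = c v u)
    (hcpos : ∀ u v, G.Adj u v → 0 < c u v)
    (ρ : V) (htransient : 0 < effCondToInfinity G c ρ) (A : Set V) :
    (⨆ n, ENNReal.ofReal (netHitBy G c A n ρ))
      ≤ freeEffCond G c {ρ} A / effCondToInfinity G c ρ := by
  refine iSup_le fun n => ?_
  classical
  set W : Finset V := Bset G ρ n with hWdef
  set W' : Finset V := W ∪ W.biUnion (fun v => G.neighborFinset v) with hW'def
  have hWW' : W ⊆ W' := Finset.subset_union_left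
  have hadjW' : ∀ x y, G.Adj x y → x ∈ W → y ∈ W' := by
    intro x y hxy hx
    refine Finset.mem_union_right _ (Finset.mem_biUnion.mpr ⟨x, hx, ?_⟩)
    simpa using hxy
  have hNW' : ∀ u, u ∈ W → ∀ y, G.Adj u y → y ∈ W' := fun u hu y hy => hadjW' u y hy hu
  have hρW : ρ ∈ W := by
    have h0 : ρ ∈ Bset G ρ 0 := by rw [Bset]; exact Finset.mem_singleton_self ρ
    exact Bset_mono ρ (Nat.zero_le n) h0
  -- the minimiser `f` : unit voltage between ρ and A ∪ Wᶜ
  obtain ⟨f, hfS, hfmin⟩ := exists_minOn G c W W'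
    (fun x => if x = ρ then {(1:ℝ)} else if x ∈ A then {0} else if x ∈ W then Set.Icc 0 1 else {0})
    (by intro x
        split_ifs <;> first | exact isCompact_singleton | exact isCompact_Icc)
    (by intro x
        split_ifs <;> first | exact Set.singleton_nonempty _ | exact ⟨0, by norm_num⟩)
  have hfSbox : ∀ x, (if x = ρ then {(1:ℝ)} else if x ∈ A then {0} else if x ∈ W then
      Set.Icc 0 1 else {0}) ⊆ Set.Icc (0:ℝ) 1 := by
    intro x
    split_ifs <;>
      first
        | exact subset_rfl
        | (intro t ht; rw [Set.mem_singleton_iff] at ht; subst ht; constructor <;> norm_num)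
  have hfmem : ∀ x, f x ∈ (if x = ρ then {(1:ℝ)} else if x ∈ A then {0} else if x ∈ W then
      Set.Icc 0 1 else {0}) := fun x => hfS x (Set.mem_univ x)
  have hf1 : f ρ = 1 := by
    have h := hfmem ρ; rw [if_pos rfl, Set.mem_singleton_iff] at h; exact h
  have hfbox : ∀ x, 0 ≤ f x ∧ f x ≤ 1 := fun x => by
    have h := hfSbox x (hfmem x); exact ⟨h.1, h.2⟩
  have hf0A : ∀ x ∈ A, x ≠ ρ → f x = 0 := by
    intro x hx hxρ
    have h := hfmem x; rw [if_neg hxρ, if_pos hx, Set.mem_singleton_iff] at h; exact h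
  have hf0W : ∀ x ∉ W, f x = 0 := by
    intro x hx
    have hxρ : x ≠ ρ := fun h => hx (h ▸ hρW)
    have h := hfmem x
    rw [if_neg hxρ] at h
    by_cases hA : x ∈ A
    · rw [if_pos hA, Set.mem_singleton_iff] at h; exact h
    · rw [if_neg hA, if_neg hx, Set.mem_singleton_iff] at h; exact h
  have hfharmW' : ∀ u ∈ W, u ≠ ρ → u ∉ A →
      (∑ y ∈ W', epair G c W u y) * f u = ∑ y ∈ W', epair G c W u y * f y := by
    intro u hu huρ huA
    refine minOn_harmonic hcsymm hcpos W W' _ f hfS hfmin hfSbox u (hWW' hu) ?_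
    rw [if_neg huρ, if_neg huA, if_pos hu]
  have hfharm : ∀ u ∈ W, u ≠ ρ → u ∉ A →
      (∑ z ∈ G.neighborFinset u, c u z) * f u = ∑ z ∈ G.neighborFinset u, c u z * f z := by
    intro u hu huρ huA
    have h1 := hfharmW' u hu huρ huA
    have h2 := sum_epair_mul (G := G) (c := c) W W' u hu (hNW' u hu) (fun _ => (1:ℝ))
    simp only [mul_one] at h2
    have h3 := sum_epair_mul (G := G) (c := c) W W' u hu (hNW' u hu) f
    rw [h2, h3] at h1
    exact h1
  have hfflow : Efin G c W W' f = ∑ z ∈ G.neighborFinset ρ, c ρ z * (f ρ - f z) := by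
    have hdisj : ∀ x ∈ W', x ≠ ρ → f x = 0 ∨
        (∑ y ∈ W', epair G c W x y) * f x = ∑ y ∈ W', epair G c W x y * f y := by
      intro x hx hxρ
      by_cases hA : x ∈ A
      · exact Or.inl (hf0A x hA hxρ)
      by_cases hW : x ∈ W
      · exact Or.inr (hfharmW' x hW hxρ hA)
      · exact Or.inl (hf0W x hW)
    have h1 := Efin_eq_flow hcsymm W W' f ρ (hWW' hρW) hf1 hdisj
    rw [h1]
    exact sum_epair_mul (G := G) (c := c) W W' ρ hρW (hNW' ρ hρW) (fun y => f ρ - f y)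
  have hED : dirichletEnergy G c f = ENNReal.ofReal (Efin G c W W' f) :=
    dirichletEnergy_eq_ofReal_Efin hcpos W W' hWW' hadjW' f hf0W
  have hκle : effCondToInfinity G c ρ ≤ ENNReal.ofReal (Efin G c W W' f) := by
    calc effCondToInfinity G c ρ ≤ freeEffCond G c {ρ} {v | v ∉ W} := by
          rw [effCondToInfinity]; exact iInf_le _ W
      _ ≤ dirichletEnergy G c f := by
          rw [freeEffCond]
          refine iInf_le_of_le f (iInf_le_of_le ?_ (iInf_le_of_le ?_ le_rfl))
          · intro a ha; rw [Set.mem_singleton_iff] at ha; rw [ha]; exact hf1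
          · intro b hb; exact hf0W b hb
      _ = _ := hED
  have hCSpos : 0 < Efin G c W W' f := by
    by_contra h
    push_neg at h
    have h0 : ENNReal.ofReal (Efin G c W W' f) = 0 := by
      rw [ENNReal.ofReal_eq_zero]; exact h
    rw [h0] at hκle
    exact lt_irrefl 0 (lt_of_lt_of_le htransient hκle)
  have hκtop : effCondToInfinity G c ρ ≠ ⊤ :=
    ne_top_of_le_ne_top ENNReal.ofReal_ne_top hκle
  rw [ENNReal.le_div_iff_mul_le (Or.inl htransient.ne') (Or.inl hκtop)]
  rw [freeEffCond]
  refine le_iInf fun g => le_iInf fun hg1 => le_iInf fun hg0 => ?_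
  have hgρ : g ρ = 1 := hg1 ρ rfl
  by_cases hρA : ρ ∈ A
  · have h0 := hg0 ρ hρA
    rw [hgρ] at h0
    exact absurd h0 one_ne_zero
  -- the minimiser `w` : free unit voltage between ρ and A, with boundary data g
  obtain ⟨w, hwS, hwmin⟩ := exists_minOn G c W W'
    (fun x => if x = ρ then {(1:ℝ)} else if x ∈ A then {0} else Set.Icc 0 1)
    (by intro x
        split_ifs <;> first | exact isCompact_singleton | exact isCompact_Icc)
    (by intro x
        split_ifs <;> first | exact Set.singleton_nonempty _ | exact ⟨0, by norm_num⟩)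
  have hwSbox : ∀ x, (if x = ρ then {(1:ℝ)} else if x ∈ A then {0} else Set.Icc 0 1)
      ⊆ Set.Icc (0:ℝ) 1 := by
    intro x
    split_ifs <;>
      first
        | exact subset_rfl
        | (intro t ht; rw [Set.mem_singleton_iff] at ht; subst ht; constructor <;> norm_num)
  have hwmem : ∀ x, w x ∈ (if x = ρ then {(1:ℝ)} else if x ∈ A then {0} else Set.Icc 0 1) :=
    fun x => hwS x (Set.mem_univ x)
  have hw1 : w ρ = 1 := by
    have h := hwmem ρ; rw [if_pos rfl, Set.mem_singleton_iff] at h; exact h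
  have hw0A : ∀ x ∈ A, w x = 0 := by
    intro x hx
    have hxρ : x ≠ ρ := fun h => hρA (h ▸ hx)
    have h := hwmem x; rw [if_neg hxρ, if_pos hx, Set.mem_singleton_iff] at h; exact h
  have hwbox : ∀ x, 0 ≤ w x ∧ w x ≤ 1 := fun x => by
    have h := hwSbox x (hwmem x); exact ⟨h.1, h.2⟩
  have hwharmW' : ∀ u ∈ W', u ≠ ρ → u ∉ A →
      (∑ y ∈ W', epair G c W u y) * w u = ∑ y ∈ W', epair G c W u y * w y := by
    intro u hu huρ huA
    refine minOn_harmonic hcsymm hcpos W W' _ w hwS hwmin hwSbox u hu ?_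
    rw [if_neg huρ, if_neg huA]
  have hwharm : ∀ u ∈ W, u ≠ ρ → u ∉ A →
      (∑ z ∈ G.neighborFinset u, c u z) * w u = ∑ z ∈ G.neighborFinset u, c u z * w z := by
    intro u hu huρ huA
    have h1 := hwharmW' u (hWW' hu) huρ huA
    have h2 := sum_epair_mul (G := G) (c := c) W W' u hu (hNW' u hu) (fun _ => (1:ℝ))
    simp only [mul_one] at h2
    have h3 := sum_epair_mul (G := G) (c := c) W W' u hu (hNW' u hu) w
    rw [h2, h3] at h1
    exact h1
  have hwflow : Efin G c W W' w = ∑ z ∈ G.neighborFinset ρ, c ρ z * (w ρ - w z) := by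
    have hdisj : ∀ x ∈ W', x ≠ ρ → w x = 0 ∨
        (∑ y ∈ W', epair G c W x y) * w x = ∑ y ∈ W', epair G c W x y * w y := by
      intro x hx hxρ
      by_cases hA : x ∈ A
      · exact Or.inl (hw0A x hA)
      · exact Or.inr (hwharmW' x hx hxρ hA)
    have h1 := Efin_eq_flow hcsymm W W' w ρ (hWW' hρW) hw1 hdisj
    rw [h1]
    exact sum_epair_mul (G := G) (c := c) W W' ρ hρW (hNW' ρ hρW) (fun y => w ρ - w y)
  have hclamp : (fun x => clamp (g x)) ∈ Set.pi Set.univ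
      (fun x => if x = ρ then {(1:ℝ)} else if x ∈ A then {0} else Set.Icc 0 1) := by
    intro x _
    dsimp only
    split_ifs with h1 h2
    · rw [Set.mem_singleton_iff, h1, hgρ, clamp_one]
    · rw [Set.mem_singleton_iff, hg0 x h2, clamp_zero]
    · exact ⟨clamp_nonneg _, clamp_le_one _⟩
  have hwle : Efin G c W W' w ≤ Efin G c W W' (fun x => clamp (g x)) := hwmin _ hclamp
  have hDW0 : 0 ≤ Efin G c W W' w := Efin_nonneg hcpos W W' w
  have hM0 : 0 ≤ Efin G c W W' w / Efin G c W W' f := div_nonneg hDW0 hCSpos.le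
  have hMstep : ∑ z ∈ G.neighborFinset ρ, walkStep G c ρ z *
      ((1 - w z) + f z * (Efin G c W W' w / Efin G c W W' f))
      ≤ Efin G c W W' w / Efin G c W W' f := by
    rcases Finset.eq_empty_or_nonempty (G.neighborFinset ρ) with he | hne
    · rw [he]; simpa using hM0
    · have hπ : 0 < ∑ z ∈ G.neighborFinset ρ, c ρ z :=
        Finset.sum_pos (fun z hz => hcpos _ _ (by simpa using hz)) hne
      have hCSM : Efin G c W W' f * (Efin G c W W' w / Efin G c W W' f)
          = Efin G c W W' w := by
        field_simp
      have hstep : ∀ z ∈ G.neighborFinset ρ, walkStep G c ρ z *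
          ((1 - w z) + f z * (Efin G c W W' w / Efin G c W W' f))
          = (c ρ z * ((1 - w z) + f z * (Efin G c W W' w / Efin G c W W' f)))
            / (∑ z ∈ G.neighborFinset ρ, c ρ z) := by
        intro z hz
        rw [walkStep, if_pos (show G.Adj ρ z by simpa using hz)]
        ring
      rw [Finset.sum_congr rfl hstep, ← Finset.sum_div, div_le_iff₀ hπ]
      have hexp : ∑ z ∈ G.neighborFinset ρ, c ρ z *
          ((1 - w z) + f z * (Efin G c W W' w / Efin G c W W' f))
          = (∑ z ∈ G.neighborFinset ρ, c ρ z * (1 - w z))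
            + (∑ z ∈ G.neighborFinset ρ, c ρ z * f z)
              * (Efin G c W W' w / Efin G c W W' f) := by
        rw [Finset.sum_mul, ← Finset.sum_add_distrib]
        apply Finset.sum_congr rfl; intro z _; ring
      have hDWn : ∑ z ∈ G.neighborFinset ρ, c ρ z * (1 - w z) = Efin G c W W' w := by
        rw [hwflow]
        apply Finset.sum_congr rfl; intro z _; rw [hw1]
      have hCSn : ∑ z ∈ G.neighborFinset ρ, c ρ z * f z
          = (∑ z ∈ G.neighborFinset ρ, c ρ z) - Efin G c W W' f := by
        rw [hfflow, ← Finset.sum_sub_distrib]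
        apply Finset.sum_congr rfl; intro z _; rw [hf1]; ring
      rw [hexp, hDWn, hCSn]
      nlinarith [hCSM, hπ, hM0]
  have hbef := befR_le hcpos A W ρ w hw1 hw0A hwbox hwharm
  have hret := retR_le hcpos A W ρ f hf1 (fun x => (hfbox x).1) hfharm
  have hmaster := hitR_le_master hcpos A W ρ hρA hρW
    (Efin G c W W' w / Efin G c W W' f) hM0 (fun z => 1 - w z) f
    (fun k z => hbef k z) (fun k z => hret k z) hMstep n ρ
  rw [befR_rho A W ρ hρA n, retR_rho A W ρ n] at hmaster
  have hnh : netHitBy G c A n ρ ≤ hitR G c A W n ρ := by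
    refine netHitBy_le_hitR hcpos A ρ n n 0 ρ (by omega) ?_
    rw [Bset]; exact Finset.mem_singleton_self ρ
  have hreal : netHitBy G c A n ρ * Efin G c W W' f
      ≤ Efin G c W W' (fun x => clamp (g x)) := by
    have h1 : netHitBy G c A n ρ ≤ Efin G c W W' w / Efin G c W W' f := by
      linarith [hnh, hmaster]
    calc netHitBy G c A n ρ * Efin G c W W' f
        ≤ (Efin G c W W' w / Efin G c W W' f) * Efin G c W W' f :=
          mul_le_mul_of_nonneg_right h1 hCSpos.le
      _ = Efin G c W W' w := div_mul_cancel₀ _ hCSpos.ne'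
      _ ≤ _ := hwle
  calc ENNReal.ofReal (netHitBy G c A n ρ) * effCondToInfinity G c ρ
      ≤ ENNReal.ofReal (netHitBy G c A n ρ) * ENNReal.ofReal (Efin G c W W' f) :=
        mul_le_mul_right hκle _
    _ = ENNReal.ofReal (netHitBy G c A n ρ * Efin G c W W' f) :=
        (ENNReal.ofReal_mul (netHitBy_nonneg hcpos A n ρ)).symm
    _ ≤ ENNReal.ofReal (Efin G c W W' (fun x => clamp (g x))) :=
        ENNReal.ofReal_le_ofReal hreal
    _ ≤ dirichletEnergy G c g := ofReal_Efin_clamp_le hcpos W W' g
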